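/- If t̄ ∉ C and 0 ≤ λ < λ#, then the norm-penalized KLIEP loss ℓ_λ(Δ) = ℓ(Δ) + λ·N(Δ) is unbounded from below: for every M ∈ ℝ there exists Δ ∈ ℝ^k with ℓ_λ(Δ) < M. (Theorem 2(iii)(c).) -/

import Mathlib

open scoped RealInnerProductSpace
open Pointwise

noncomputable def kliepLoss {k n : ℕ} (tbar : EuclideanSpace ℝ (Fin k))
    (t : Fin n → EuclideanSpace ℝ (Fin k)) (Δ : EuclideanSpace ℝ (Fin k)) : ℝ :=
  -⟪Δ, tbar⟫ + Real.log ((1 / (n : ℝ)) * ∑ j, Real.exp ⟪Δ, t j⟫)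

noncomputable def dualNorm {k : ℕ} (N : EuclideanSpace ℝ (Fin k) → ℝ)
    (v : EuclideanSpace ℝ (Fin k)) : ℝ :=
  sSup ((fun Δ : EuclideanSpace ℝ (Fin k) => ⟪Δ, v⟫) '' {Δ | N Δ ≤ 1})

lemma aux_N_sum_le {k : ℕ} {N : EuclideanSpace ℝ (Fin k) → ℝ}
    (hN_add : ∀ x y, N (x + y) ≤ N x + N y) (hN0 : N 0 = 0)
    {ι : Type*} (s : Finset ι) (f : ι → EuclideanSpace ℝ (Fin k)) :
    N (∑ i ∈ s, f i) ≤ ∑ i ∈ s, N (f i) := by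
  classical
  induction s using Finset.induction with
  | empty => simp [hN0]
  | insert _ _ hx ih =>
    rw [Finset.sum_insert hx, Finset.sum_insert hx]
    exact le_trans (hN_add _ _) (by linarith)

set_option maxHeartbeats 1000000 in
theorem penalized_kliep_unbounded_of_lt_dual_dist {k n : ℕ} (hk : 1 ≤ k) (hn : 1 ≤ n)
    (tbar : EuclideanSpace ℝ (Fin k)) (t : Fin n → EuclideanSpace ℝ (Fin k))
    (N : EuclideanSpace ℝ (Fin k) → ℝ)
    (hN_add : ∀ x y, N (x + y) ≤ N x + N y)
    (hN_smul : ∀ (c : ℝ) (x), N (c • x) = |c| * N x)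
    (hN_zero : ∀ x, N x = 0 ↔ x = 0)
    (hout : tbar ∉ convexHull ℝ (Set.range t))
    (lam : ℝ)
    (hlam : IsLeast ((fun s => dualNorm N (tbar - s)) '' convexHull ℝ (Set.range t)) lam) :
    ∀ lam' : ℝ, 0 ≤ lam' → lam' < lam →
      ∀ M : ℝ, ∃ Δ : EuclideanSpace ℝ (Fin k),
        kliepLoss tbar t Δ + lam' * N Δ < M := by
  classical
  intro lam' hl0 hllt M
  have hnpos : (0:ℝ) < n := by exact_mod_cast hn
  haveI : Nonempty (Fin n) := ⟨⟨0, hn⟩⟩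
  set C := convexHull ℝ (Set.range t) with hCdef
  have hN0 : N 0 = 0 := by simpa using hN_smul 0 0
  have hNneg : ∀ x, 0 ≤ N x := by
    intro x
    have h1 : N ((-1:ℝ) • x) = N x := by rw [hN_smul]; simp
    have h2 := hN_add x ((-1:ℝ) • x)
    have h3 : x + (-1:ℝ) • x = 0 := by simp
    rw [h3, hN0, h1] at h2
    linarith
  -- upper bound on N
  set c1 : ℝ := ∑ i, N (EuclideanSpace.single i (1:ℝ)) with hc1def
  have hc1nn : 0 ≤ c1 := Finset.sum_nonneg fun i _ => hNneg _
  have hcoord : ∀ (x : EuclideanSpace ℝ (Fin k)) (i : Fin k), |x i| ≤ ‖x‖ := by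
    intro x i
    have h := abs_real_inner_le_norm (EuclideanSpace.single i (1:ℝ)) x
    simpa [EuclideanSpace.inner_single_left, EuclideanSpace.norm_single] using h
  have hc1 : ∀ x, N x ≤ c1 * ‖x‖ := by
    intro x
    have hx : x = ∑ i, x i • EuclideanSpace.single i (1:ℝ) := by
      ext j
      rw [WithLp.ofLp_sum, Finset.sum_apply]
      simp [EuclideanSpace.single_apply]
    calc N x = N (∑ i, x i • EuclideanSpace.single i (1:ℝ)) := by rw [← hx]
      _ ≤ ∑ i, N (x i • EuclideanSpace.single i (1:ℝ)) :=
          aux_N_sum_le hN_add hN0 _ _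
      _ = ∑ i, |x i| * N (EuclideanSpace.single i (1:ℝ)) := by
          simp only [hN_smul]
      _ ≤ ∑ i, ‖x‖ * N (EuclideanSpace.single i (1:ℝ)) :=
          Finset.sum_le_sum fun i _ =>
            mul_le_mul_of_nonneg_right (hcoord x i) (hNneg _)
      _ = c1 * ‖x‖ := by rw [← Finset.mul_sum, mul_comm]
  have hNcont : Continuous N := by
    have hlip : LipschitzWith c1.toNNReal N := by
      apply LipschitzWith.of_dist_le_mul
      intro x y
      rw [Real.dist_eq, dist_eq_norm, Real.coe_toNNReal c1 hc1nn]
      have h1 : N x ≤ N (x - y) + N y := by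
        have := hN_add (x - y) y; simpa using this
      have h2 : N y ≤ N (y - x) + N x := by
        have := hN_add (y - x) x; simpa using this
      have h3 : N (y - x) = N (x - y) := by
        have : (-1:ℝ) • (x - y) = y - x := by simp
        rw [← this, hN_smul]; simp
      have h4 := hc1 (x - y)
      rw [h3] at h2
      rw [abs_le]
      constructor <;> linarith
    exact hlip.continuous
  -- the predual ball of radius lam'
  set B : Set (EuclideanSpace ℝ (Fin k)) := {w | ∀ y, N y ≤ 1 → ⟪y, w⟫ ≤ lam'} with hBdef
  have h0B : (0 : EuclideanSpace ℝ (Fin k)) ∈ B := by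
    intro y hy; simpa using hl0
  have hBconv : Convex ℝ B := by
    intro w1 h1 w2 h2 a b ha hb hab y hy
    have := h1 y hy
    have := h2 y hy
    rw [inner_add_right, real_inner_smul_right, real_inner_smul_right]
    nlinarith
  have hBclosed : IsClosed B := by
    have : B = ⋂ y ∈ {y | N y ≤ 1}, {w | ⟪y, w⟫ ≤ lam'} := by
      ext w; simp [hBdef, Set.mem_iInter]
    rw [this]
    refine isClosed_biInter fun y _ => ?_
    exact isClosed_le (continuous_const.inner continuous_id) continuous_const
  have hBbdd : Bornology.IsBounded B := by
    rw [Metric.isBounded_iff_subset_closedBall 0]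
    refine ⟨c1 * lam', fun w hw => ?_⟩
    simp only [Metric.mem_closedBall, dist_zero_right]
    rcases eq_or_ne w 0 with rfl | hw0
    · simpa using mul_nonneg hc1nn hl0
    · have hNw : 0 < N w := (hNneg w).lt_of_ne fun h => hw0 ((hN_zero w).mp h.symm)
      have hy : N ((N w)⁻¹ • w) ≤ 1 := by
        rw [hN_smul, abs_of_pos (inv_pos.mpr hNw)]
        field_simp
        exact le_rfl
      have h := hw _ hy
      rw [real_inner_smul_left, real_inner_self_eq_norm_sq] at h
      have hNwle := hc1 w
      have hwpos : 0 < ‖w‖ := norm_pos_iff.mpr hw0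
      rw [inv_mul_le_iff₀ hNw] at h
      nlinarith [mul_le_mul_of_nonneg_left hNwle hl0]
  have hBcomp : IsCompact B := Metric.isCompact_of_isClosed_isBounded hBclosed hBbdd
  have hCcomp : IsCompact C := (Set.finite_range t).isCompact_convexHull ℝ
  have hCconv : Convex ℝ C := convex_convexHull ℝ _
  set K := C + B with hKdef
  have hKcomp : IsCompact K := hCcomp.add hBcomp
  have hKconv : Convex ℝ K := hCconv.add hBconv
  have htbarK : tbar ∉ K := by
    intro hmem
    obtain ⟨s, hs, w, hw, hsum⟩ := Set.mem_add.mp hmem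
    have hd : dualNorm N (tbar - s) ≤ lam' := by
      have hts : tbar - s = w := by rw [← hsum]; abel
      rw [hts]
      apply csSup_le
      · exact ⟨⟪(0:EuclideanSpace ℝ (Fin k)), w⟫, 0, by simp [hN0], rfl⟩
      · rintro x ⟨y, hy, rfl⟩
        exact hw y hy
    have hle := hlam.2 (Set.mem_image_of_mem _ hs)
    linarith
  obtain ⟨f, u, hfK, hfu⟩ := geometric_hahn_banach_closed_point hKconv hKcomp.isClosed htbarK
  set Δ := (InnerProductSpace.toDual ℝ (EuclideanSpace ℝ (Fin k))).symm f with hΔdef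
  have hΔapp : ∀ x, ⟪Δ, x⟫ = f x := fun x => InnerProductSpace.toDual_symm_apply
  have hsep : ∀ j, ∀ w ∈ B, ⟪Δ, t j⟫ + ⟪Δ, w⟫ < ⟪Δ, tbar⟫ := by
    intro j w hw
    have hmem : t j + w ∈ K :=
      Set.add_mem_add (subset_convexHull ℝ _ (Set.mem_range_self j)) hw
    have h1 := hfK _ hmem
    have h2 : f (t j + w) = f (t j) + f w := map_add f _ _
    simp only [hΔapp]
    linarith
  have hΔne : Δ ≠ 0 := by
    intro h
    have := hsep ⟨0, hn⟩ 0 h0B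
    simp [h] at this
  have hNΔpos : 0 < N Δ := (hNneg Δ).lt_of_ne fun h => hΔne ((hN_zero Δ).mp h.symm)
  set Δ1 := (N Δ)⁻¹ • Δ with hΔ1def
  have hNΔ1 : N Δ1 = 1 := by
    rw [hΔ1def, hN_smul, abs_of_pos (inv_pos.mpr hNΔpos)]
    field_simp
  set S : Set (EuclideanSpace ℝ (Fin k)) := {x | N x < 1} with hSdef
  have hSopen : IsOpen S := isOpen_lt hNcont continuous_const
  have hSconv : Convex ℝ S := by
    intro x hx y hy a b ha hb hab
    have h := hN_add (a • x) (b • y)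
    rw [hN_smul, hN_smul, abs_of_nonneg ha, abs_of_nonneg hb] at h
    simp only [hSdef, Set.mem_setOf_eq] at hx hy ⊢
    rcases lt_or_ge 0 a with hpa | hpa
    · nlinarith [mul_lt_mul_of_pos_left hx hpa, mul_le_mul_of_nonneg_left hy.le hb]
    · have ha0 : a = 0 := le_antisymm hpa ha
      subst ha0
      have hb1 : b = 1 := by linarith
      subst hb1
      simpa using hy
  have hΔ1S : Δ1 ∉ S := by simp [hSdef, hNΔ1]
  obtain ⟨g, hg⟩ := geometric_hahn_banach_open_point hSconv hSopen hΔ1S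
  have hg0 : 0 < g Δ1 := by
    have := hg 0 (by simp [hSdef, hN0])
    simpa using this
  have hgle : ∀ y, N y ≤ 1 → g y ≤ g Δ1 := by
    intro y hy
    by_contra hcon
    push_neg at hcon
    have hgy : 0 < g y := lt_trans hg0 hcon
    obtain ⟨r, hr1, hr2⟩ := exists_between ((div_lt_one hgy).mpr hcon)
    have hrpos : 0 < r := lt_trans (div_pos hg0 hgy) hr1
    have hNry : N (r • y) < 1 := by
      rw [hN_smul, abs_of_pos hrpos]
      calc r * N y ≤ r * 1 := mul_le_mul_of_nonneg_left hy hrpos.le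
        _ < 1 := by linarith
    have h := hg _ hNry
    rw [map_smul, smul_eq_mul] at h
    have := (div_lt_iff₀ hgy).mp hr1
    linarith
  set wg := (InnerProductSpace.toDual ℝ (EuclideanSpace ℝ (Fin k))).symm g with hwgdef
  have hwgapp : ∀ x, ⟪wg, x⟫ = g x := fun x => InnerProductSpace.toDual_symm_apply
  set w := (lam' / g Δ1) • wg with hwdef
  have hwB : w ∈ B := by
    intro y hy
    have heq : ⟪y, w⟫ = (lam' / g Δ1) * g y := by
      rw [hwdef, real_inner_smul_right, real_inner_comm, hwgapp]
    rw [heq]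
    calc (lam' / g Δ1) * g y ≤ (lam' / g Δ1) * g Δ1 :=
          mul_le_mul_of_nonneg_left (hgle y hy) (div_nonneg hl0 hg0.le)
      _ = lam' := div_mul_cancel₀ lam' hg0.ne'
  have hΔw : ⟪Δ, w⟫ = lam' * N Δ := by
    have h1 : ⟪Δ, wg⟫ = g Δ := by rw [real_inner_comm, hwgapp]
    have h2 : g Δ = N Δ * g Δ1 := by
      have hΔeq : Δ = N Δ • Δ1 := (smul_inv_smul₀ hNΔpos.ne' Δ).symm
      conv_lhs => rw [hΔeq]
      rw [map_smul, smul_eq_mul]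
    rw [hwdef, real_inner_smul_right, h1, h2]
    field_simp
  have hkey : ∀ j, lam' * N Δ < ⟪Δ, tbar - t j⟫ := by
    intro j
    have h := hsep j w hwB
    rw [hΔw] at h
    rw [inner_sub_right]
    linarith
  -- final analytic step
  set m : ℝ := Finset.univ.inf' Finset.univ_nonempty fun j => ⟪Δ, tbar - t j⟫ with hmdef
  have hm : lam' * N Δ < m := by
    rw [hmdef, Finset.lt_inf'_iff]
    exact fun j _ => hkey j
  set ε : ℝ := m - lam' * N Δ with hεdef
  have hεpos : 0 < ε := by simp [hεdef]; linarith
  set c : ℝ := (|M| + 1) / ε with hcdef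
  have hcpos : 0 < c := div_pos (by positivity) hεpos
  refine ⟨c • Δ, ?_⟩
  have hNc : N (c • Δ) = c * N Δ := by rw [hN_smul, abs_of_pos hcpos]
  have hmle : ∀ j, m ≤ ⟪Δ, tbar⟫ - ⟪Δ, t j⟫ := by
    intro j
    have := Finset.inf'_le (fun j => ⟪Δ, tbar - t j⟫) (Finset.mem_univ j)
    rw [inner_sub_right] at this
    exact this
  have hlog : Real.log ((1 / (n : ℝ)) * ∑ j, Real.exp ⟪c • Δ, t j⟫)
      ≤ c * ⟪Δ, tbar⟫ - c * m := by
    have hsum : ∑ j, Real.exp ⟪c • Δ, t j⟫ ≤ (n : ℝ) * Real.exp (c * ⟪Δ, tbar⟫ - c * m) := by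
      calc ∑ j, Real.exp ⟪c • Δ, t j⟫
          ≤ ∑ _j : Fin n, Real.exp (c * ⟪Δ, tbar⟫ - c * m) := by
            refine Finset.sum_le_sum fun j _ => ?_
            apply Real.exp_le_exp.mpr
            rw [real_inner_smul_left]
            have := hmle j
            nlinarith
        _ = (n : ℝ) * Real.exp (c * ⟪Δ, tbar⟫ - c * m) := by
            rw [Finset.sum_const, Finset.card_univ, Fintype.card_fin, nsmul_eq_mul]
    have hpos : 0 < (1 / (n : ℝ)) * ∑ j, Real.exp ⟪c • Δ, t j⟫ := by
      apply mul_pos (by positivity)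
      exact Finset.sum_pos (fun j _ => Real.exp_pos _) Finset.univ_nonempty
    have hle : (1 / (n : ℝ)) * ∑ j, Real.exp ⟪c • Δ, t j⟫
        ≤ Real.exp (c * ⟪Δ, tbar⟫ - c * m) := by
      rw [div_mul_eq_mul_div, one_mul, div_le_iff₀ hnpos]
      linarith [hsum]
    calc Real.log ((1 / (n : ℝ)) * ∑ j, Real.exp ⟪c • Δ, t j⟫)
        ≤ Real.log (Real.exp (c * ⟪Δ, tbar⟫ - c * m)) :=
          (Real.log_le_log_iff hpos (Real.exp_pos _)).mpr hle
      _ = c * ⟪Δ, tbar⟫ - c * m := Real.log_exp _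
  have hinner : ⟪c • Δ, tbar⟫ = c * ⟪Δ, tbar⟫ := real_inner_smul_left _ _ _
  have hcε : c * ε = |M| + 1 := div_mul_cancel₀ _ hεpos.ne'
  have : kliepLoss tbar t (c • Δ) + lam' * N (c • Δ) ≤ -(|M| + 1) := by
    rw [kliepLoss, hinner, hNc]
    have : -(c * ⟪Δ, tbar⟫) + (c * ⟪Δ, tbar⟫ - c * m) + lam' * (c * N Δ) = -(c * ε) := by
      rw [hεdef]; ring
    nlinarith [hlog]
  have habs : -(|M| + 1) < M := by
    have := neg_abs_le M
    linarith
  linarith
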